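/- Let H be a connected k-uniform hypergraph with n vertices, at least one edge, maximum degree Δ, minimum degree δ, and signless Laplacian eigenpair (ρ, x). Then x_max ≥ Δ/√(δ² + (n−1)Δ²), and equality holds if and only if H is regular. -/

import Mathlib

open Finset Matrix

variable {V : Type*} [Fintype V] [DecidableEq V]

/-- The incidence matrix of a hypergraph with vertex type `V` and edge set `E`:
`B(v,e) = 1` if `v ∈ e` and `0` otherwise. -/
def inc (E : Finset (Finset V)) : Matrix V ↥E ℝ :=
  fun v e => if v ∈ (e : Finset V) then 1 else 0

/-- The signless Laplacian matrix `Q = B * Bᵀ`. -/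
def signlessLap (E : Finset (Finset V)) : Matrix V V ℝ :=
  inc E * (inc E)ᵀ

/-- The degree of a vertex: the number of edges containing it. -/
def deg (E : Finset (Finset V)) (v : V) : ℕ :=
  (E.filter fun e => v ∈ e).card

/-- A hypergraph is connected if the reflexive-transitive closure of the relation
"`u ≠ v` and some edge contains both `u` and `v`" relates every pair of vertices. -/
def HConnected (E : Finset (Finset V)) : Prop :=
  ∀ u v : V, Relation.ReflTransGen (fun a b => a ≠ b ∧ ∃ e ∈ E, a ∈ e ∧ b ∈ e) u v

/-- A hypergraph is regular if all vertices have the same degree. -/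
def HRegular (E : Finset (Finset V)) : Prop :=
  ∃ r, ∀ v : V, deg E v = r

/-- A signless Laplacian eigenpair `(ρ, x)`: `x` is entrywise positive,
normalized by `∑ v, x v ^ 2 = 1`, and `Q x = ρ x`. -/
def Eigenpair (E : Finset (Finset V)) (ρ : ℝ) (x : V → ℝ) : Prop :=
  (∀ v, 0 < x v) ∧ (∑ v, x v ^ 2 = 1) ∧ (signlessLap E).mulVec x = ρ • x


lemma sLap_mulVec (E : Finset (Finset V)) (x : V → ℝ) (v : V) :
    (signlessLap E).mulVec x v = ∑ e ∈ E.filter (fun e => v ∈ e), ∑ w ∈ e, x w := by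
  unfold signlessLap
  simp only [Matrix.mulVec, Matrix.mul_apply, Matrix.transpose_apply, dotProduct]
  simp only [inc, Finset.sum_mul, ite_mul, one_mul, zero_mul]
  rw [Finset.sum_comm, Finset.univ_eq_attach]
  have h1 : ∀ y ∈ E.attach, (∑ w : V, if v ∈ (y:Finset V) then if w ∈ (y:Finset V) then x w else 0 else 0)
      = if v ∈ (y:Finset V) then ∑ w ∈ (y:Finset V), x w else 0 := by
    intro y _
    by_cases hv : v ∈ (y:Finset V)
    · simp only [hv, if_true]
      rw [Finset.sum_ite_mem, Finset.univ_inter]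
    · simp [hv]
  rw [Finset.sum_congr rfl h1, Finset.sum_attach E (fun e => if v ∈ e then ∑ w ∈ e, x w else 0),
    Finset.sum_filter]

lemma double_count (F : Finset (Finset V)) (g : V → ℝ) :
    ∑ e ∈ F, ∑ v ∈ e, g v = ∑ v : V, ((F.filter fun e => v ∈ e).card : ℝ) * g v := by
  have h1 : ∀ e ∈ F, ∑ v ∈ e, g v = ∑ v : V, if v ∈ e then g v else 0 := by
    intro e _
    rw [Finset.sum_ite_mem, Finset.univ_inter]
  rw [Finset.sum_congr rfl h1, Finset.sum_comm]
  apply Finset.sum_congr rfl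
  intro v _
  rw [← Finset.sum_filter, Finset.sum_const, nsmul_eq_mul]

lemma double_count' (E : Finset (Finset V)) (S : Finset V → ℝ) :
    ∑ v : V, ∑ e ∈ E.filter (fun e => v ∈ e), S e = ∑ e ∈ E, (e.card : ℝ) * S e := by
  have h1 : ∀ v : V, ∑ e ∈ E.filter (fun e => v ∈ e), S e = ∑ e ∈ E, if v ∈ e then S e else 0 := by
    intro v; rw [Finset.sum_filter]
  rw [Finset.sum_congr rfl (fun v _ => h1 v), Finset.sum_comm]
  apply Finset.sum_congr rfl
  intro e _
  rw [Finset.sum_ite_mem, Finset.univ_inter, Finset.sum_const, nsmul_eq_mul]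

lemma sum_eq_of_le {α : Type*} {s : Finset α} {f : α → ℝ} {b : ℝ}
    (hle : ∀ i ∈ s, f i ≤ b) (heq : ∑ i ∈ s, f i = (s.card : ℝ) * b) :
    ∀ i ∈ s, f i = b := by
  intro i hi
  by_contra hne
  have hlt : f i < b := lt_of_le_of_ne (hle i hi) hne
  have h2 : ∑ j ∈ s, f j < ∑ j ∈ s, b := Finset.sum_lt_sum hle ⟨i, hi, hlt⟩
  rw [Finset.sum_const, nsmul_eq_mul, ← heq] at h2
  exact lt_irrefl _ h2

lemma case2_arith (k D d ρ M a T : ℝ) (hk : 2 ≤ k) (hd : 0 < d)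
    (ha : 0 < a) (haM : a ≤ M) (hc : d * M < D * a)
    (h1 : ρ * a ≤ d * (a + (k - 1) * M))
    (h2 : k * D * M - ρ * M ≤ d * (M - a) + D * T) :
    (D ^ 2 - d ^ 2) * M ^ 2 < D ^ 2 * ((M ^ 2 - a ^ 2) + M * T) := by
  have hM : 0 < M := lt_of_lt_of_le ha haM
  have hD : 0 < D := by nlinarith
  have hdD : d < D := by nlinarith
  have slack1 : 0 < (D * a - d * M) * (k * D * M ^ 2 - D * a ^ 2 - d * a * M) := by
    apply mul_pos (by linarith)
    have e1 : D * a ^ 2 ≤ D * M ^ 2 :=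
      mul_le_mul_of_nonneg_left (pow_le_pow_left₀ ha.le haM 2) hD.le
    have e2 : d * a * M ≤ d * M * M :=
      mul_le_mul_of_nonneg_right (mul_le_mul_of_nonneg_left haM hd.le) hM.le
    have e3 : d * M * M < D * M * M :=
      mul_lt_mul_of_pos_right (mul_lt_mul_of_pos_right hdD hM) hM
    have e4 : 0 ≤ (k - 2) * (D * M ^ 2) := mul_nonneg (by linarith) (by positivity)
    nlinarith
  have slack2 : 0 ≤ d * D * M * (M - a) ^ 2 := by positivity
  have f1 : D * M * M * (ρ * a) ≤ D * M * M * (d * (a + (k - 1) * M)) :=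
    mul_le_mul_of_nonneg_left h1 (by positivity)
  have f2 : a * D * M * (k * D * M - ρ * M) ≤ a * D * M * (d * (M - a) + D * T) :=
    mul_le_mul_of_nonneg_left h2 (by positivity)
  have key : a * ((D ^ 2 - d ^ 2) * M ^ 2) < a * (D ^ 2 * ((M ^ 2 - a ^ 2) + M * T)) := by
    nlinarith [f1, f2, slack1, slack2]
  exact lt_of_mul_lt_mul_left key ha.le

set_option maxHeartbeats 4000000 in
/-- For a connected `k`-graph with `n` vertices, at least one edge, maximum degree `Δ`,
minimum degree `δ` and signless Laplacian eigenpair `(ρ, x)`: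
`x_max ≥ Δ/√(δ² + (n−1)Δ²)`, with equality iff `H` is regular. -/
theorem xmax_ge_delta_bound {V : Type*} [Fintype V] [DecidableEq V] (k : ℕ)
    (hk : 2 ≤ k) (E : Finset (Finset V)) (hunif : ∀ e ∈ E, e.card = k)
    (hconn : HConnected E) (hE : E.Nonempty)
    (ρ : ℝ) (x : V → ℝ) (hx : Eigenpair E ρ x)
    (Δ δ : ℕ) (hΔ : IsGreatest (Set.range (deg E)) Δ) (hδ : IsLeast (Set.range (deg E)) δ)
    (xmax : ℝ) (hmax : IsGreatest (Set.range x) xmax) :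
    (Δ : ℝ) / Real.sqrt ((δ : ℝ) ^ 2 + ((Fintype.card V : ℝ) - 1) * (Δ : ℝ) ^ 2) ≤ xmax ∧
      (xmax = (Δ : ℝ) / Real.sqrt ((δ : ℝ) ^ 2 + ((Fintype.card V : ℝ) - 1) * (Δ : ℝ) ^ 2)
        ↔ HRegular E) := by
  obtain ⟨hxpos, hxnorm, hxeig⟩ := hx
  set n : ℕ := Fintype.card V with hn
  -- pointwise eigen equation
  have eig : ∀ v, ρ * x v = ∑ e ∈ E.filter (fun e => v ∈ e), ∑ w ∈ e, x w := by
    intro v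
    have h := congrFun hxeig v
    rw [sLap_mulVec] at h
    rw [h]; simp
  obtain ⟨vstar, hvstar⟩ := hmax.1
  have hxle : ∀ v, x v ≤ xmax := fun v => hmax.2 ⟨v, rfl⟩
  have hMpos : 0 < xmax := hvstar ▸ hxpos vstar
  obtain ⟨u, hu⟩ := hδ.1
  obtain ⟨w, hw⟩ := hΔ.1
  have hδle : ∀ v, δ ≤ deg E v := fun v => hδ.2 ⟨v, rfl⟩
  have hΔge : ∀ v, deg E v ≤ Δ := fun v => hΔ.2 ⟨v, rfl⟩
  have hδΔ : δ ≤ Δ := hu ▸ hΔge u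
  obtain ⟨e₀, he₀⟩ := hE
  have hkn : k ≤ n := by rw [← hunif e₀ he₀]; exact Finset.card_le_univ e₀
  have hn2 : 2 ≤ n := le_trans hk hkn
  have hδ1 : 1 ≤ δ := by
    rw [← hu]
    obtain ⟨z, hz⟩ := Fintype.exists_ne_of_one_lt_card (by omega : 1 < Fintype.card V) u
    rcases (hconn u z).cases_head with h | ⟨c, ⟨_, e, heE, hue, _⟩, _⟩
    · exact absurd h.symm hz
    · exact Finset.card_pos.2 ⟨e, Finset.mem_filter.2 ⟨heE, hue⟩⟩
  have esum_le_k : ∀ e ∈ E, ∑ w' ∈ e, x w' ≤ (k : ℝ) * xmax := by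
    intro e he
    calc ∑ w' ∈ e, x w' ≤ ∑ _w' ∈ e, xmax := Finset.sum_le_sum fun w' _ => hxle w'
    _ = (e.card : ℝ) * xmax := by rw [Finset.sum_const, nsmul_eq_mul]
    _ = (k : ℝ) * xmax := by rw [hunif e he]
  have esum_erase : ∀ e ∈ E, ∀ v ∈ e, ∑ w' ∈ e.erase v, x w' ≤ ((k : ℝ) - 1) * xmax := by
    intro e he v hv
    calc ∑ w' ∈ e.erase v, x w' ≤ ∑ _w' ∈ e.erase v, xmax :=
      Finset.sum_le_sum fun w' _ => hxle w'
    _ = ((e.erase v).card : ℝ) * xmax := by rw [Finset.sum_const, nsmul_eq_mul]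
    _ = ((k : ℝ) - 1) * xmax := by
        rw [Finset.card_erase_of_mem hv, hunif e he]
        have : (1:ℕ) ≤ k := by omega
        push_cast [Nat.cast_sub this]
        ring
  have hρ0 : 0 ≤ ρ := by
    have h := eig u
    have h0 : 0 ≤ ρ * x u := by
      rw [h]
      exact Finset.sum_nonneg fun e _ => Finset.sum_nonneg fun w' _ => (hxpos w').le
    nlinarith [hxpos u]
  -- K1
  have K1 : ρ * x u ≤ (δ : ℝ) * (x u + ((k:ℝ) - 1) * xmax) := by
    have hterm : ∀ e ∈ E.filter (fun e => u ∈ e), ∑ w' ∈ e, x w' ≤ x u + ((k:ℝ) - 1) * xmax := by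
      intro e he
      rw [Finset.mem_filter] at he
      rw [← Finset.add_sum_erase _ _ he.2]
      exact add_le_add_right (esum_erase e he.1 u he.2) _
    calc ρ * x u = ∑ e ∈ E.filter (fun e => u ∈ e), ∑ w' ∈ e, x w' := eig u
    _ ≤ ∑ _e ∈ E.filter (fun e => u ∈ e), (x u + ((k:ℝ) - 1) * xmax) :=
      Finset.sum_le_sum hterm
    _ = (δ : ℝ) * (x u + ((k:ℝ) - 1) * xmax) := by
      rw [Finset.sum_const, nsmul_eq_mul,
        show (E.filter (fun e => u ∈ e)).card = δ from hu]
  -- K2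
  have hfiltercard : ∀ (p : Finset V → Prop) [DecidablePred p] (v : V),
      ((E.filter p).filter (fun e => v ∈ e)).card ≤ deg E v := by
    intro p _ v
    apply Finset.card_le_card
    intro e he
    simp only [Finset.mem_filter] at he ⊢
    exact ⟨he.1.1, he.2⟩
  set T : ℝ := ∑ v ∈ Finset.univ.erase u, (xmax - x v) with hT
  have hTnn : 0 ≤ T := Finset.sum_nonneg fun v _ => sub_nonneg.2 (hxle v)
  have K2 : (k : ℝ) * Δ * xmax - ρ * xmax ≤ (δ : ℝ) * (xmax - x u) + (Δ : ℝ) * T := by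
    have hEwcard : (E.filter (fun e => w ∈ e)).card = Δ := hw
    have hid : ∑ e ∈ E.filter (fun e => w ∈ e), ∑ v ∈ e, (xmax - x v)
        = (k : ℝ) * Δ * xmax - ρ * x w := by
      have hterm : ∀ e ∈ E.filter (fun e => w ∈ e),
          ∑ v ∈ e, (xmax - x v) = (k:ℝ) * xmax - ∑ v ∈ e, x v := by
        intro e he
        rw [Finset.mem_filter] at he
        rw [Finset.sum_sub_distrib, Finset.sum_const, nsmul_eq_mul, hunif e he.1]
      rw [Finset.sum_congr rfl hterm, Finset.sum_sub_distrib, Finset.sum_const,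
        nsmul_eq_mul, hEwcard, ← eig w]
      ring
    have hdc := double_count (E.filter (fun e => w ∈ e)) (fun v => xmax - x v)
    have hbd : ∑ v : V, (((E.filter (fun e => w ∈ e)).filter (fun e => v ∈ e)).card : ℝ)
        * (xmax - x v) ≤ (δ : ℝ) * (xmax - x u) + (Δ : ℝ) * T := by
      rw [← Finset.add_sum_erase _ _ (Finset.mem_univ u), hT, Finset.mul_sum]
      apply add_le_add
      · apply mul_le_mul_of_nonneg_right _ (sub_nonneg.2 (hxle u))
        have := hfiltercard (fun e => w ∈ e) u
        rw [hu] at this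
        exact_mod_cast this
      · apply Finset.sum_le_sum
        intro v _
        apply mul_le_mul_of_nonneg_right _ (sub_nonneg.2 (hxle v))
        have h1 := hfiltercard (fun e => w ∈ e) v
        have h2 := hΔge v
        exact_mod_cast le_trans h1 h2
    have hwx : ρ * x w ≤ ρ * xmax := mul_le_mul_of_nonneg_left (hxle w) hρ0
    calc (k : ℝ) * Δ * xmax - ρ * xmax ≤ (k : ℝ) * Δ * xmax - ρ * x w := by linarith
    _ = ∑ e ∈ E.filter (fun e => w ∈ e), ∑ v ∈ e, (xmax - x v) := hid.symm
    _ = _ := hdc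
    _ ≤ _ := hbd
  -- identities for the sum
  have hterm_nn : ∀ v : V, 0 ≤ xmax ^ 2 - x v ^ 2 := by
    intro v; nlinarith [hxle v, hxpos v]
  have hsum_id : ∑ v : V, (xmax ^ 2 - x v ^ 2) = (n : ℝ) * xmax ^ 2 - 1 := by
    rw [Finset.sum_sub_distrib, hxnorm, Finset.sum_const, nsmul_eq_mul, Finset.card_univ]
  have hTsplit : (xmax ^ 2 - x u ^ 2) + xmax * T ≤ ∑ v : V, (xmax ^ 2 - x v ^ 2) := by
    rw [← Finset.add_sum_erase _ _ (Finset.mem_univ u), hT, Finset.mul_sum]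
    apply add_le_add_right
    apply Finset.sum_le_sum
    intro v _
    nlinarith [hxpos v, hxle v]
  have hkR : (2:ℝ) ≤ (k:ℝ) := by exact_mod_cast hk
  have hδR : (0:ℝ) < (δ:ℝ) := by exact_mod_cast hδ1
  -- nonstrict main inequality
  have hmainle : ((Δ:ℝ) ^ 2 - (δ:ℝ) ^ 2) * xmax ^ 2 ≤ (Δ:ℝ) ^ 2 * ((n:ℝ) * xmax ^ 2 - 1) := by
    rcases le_or_gt ((Δ:ℝ) * x u) ((δ:ℝ) * xmax) with hcase | hcase
    · have h1 : ((Δ:ℝ) * x u) ^ 2 ≤ ((δ:ℝ) * xmax) ^ 2 := by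
        apply pow_le_pow_left₀ _ hcase
        exact mul_nonneg (Nat.cast_nonneg _) (hxpos u).le
      have h2 : xmax ^ 2 - x u ^ 2 ≤ ∑ v : V, (xmax ^ 2 - x v ^ 2) :=
        Finset.single_le_sum (fun v _ => hterm_nn v) (Finset.mem_univ u)
      rw [← hsum_id]
      have h8 := mul_le_mul_of_nonneg_left h2 (sq_nonneg (Δ:ℝ))
      nlinarith [h1, h8]
    · have hs := case2_arith (k:ℝ) (Δ:ℝ) (δ:ℝ) ρ xmax (x u) T hkR hδR
        (hxpos u) (hxle u) hcase K1 K2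
      rw [← hsum_id]
      have h7 := mul_le_mul_of_nonneg_left hTsplit (sq_nonneg (Δ:ℝ))
      linarith [hs, h7]
  -- strict main inequality in the non-regular case
  have hmainlt : δ < Δ → ((Δ:ℝ) ^ 2 - (δ:ℝ) ^ 2) * xmax ^ 2 < (Δ:ℝ) ^ 2 * ((n:ℝ) * xmax ^ 2 - 1) := by
    intro hlt
    have hΔR : (δ:ℝ) < (Δ:ℝ) := by exact_mod_cast hlt
    rcases lt_or_ge ((δ:ℝ) * xmax) ((Δ:ℝ) * x u) with hcase | hcase
    · have hs := case2_arith (k:ℝ) (Δ:ℝ) (δ:ℝ) ρ xmax (x u) T hkR hδR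
        (hxpos u) (hxle u) hcase K1 K2
      rw [← hsum_id]
      have h7 := mul_le_mul_of_nonneg_left hTsplit (sq_nonneg (Δ:ℝ))
      linarith [hs, h7]
    · rcases lt_or_eq_of_le hcase with hstrict2 | heqa
      · -- Δ x u < δ xmax : strict from the single u term
        have h2 : xmax ^ 2 - x u ^ 2 ≤ ∑ v : V, (xmax ^ 2 - x v ^ 2) :=
          Finset.single_le_sum (fun v _ => hterm_nn v) (Finset.mem_univ u)
        have h1 : ((Δ:ℝ) * x u) ^ 2 < ((δ:ℝ) * xmax) ^ 2 := by
          apply pow_lt_pow_left₀ hstrict2 _ (by norm_num)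
          exact mul_nonneg (Nat.cast_nonneg _) (hxpos u).le
        rw [← hsum_id]
        have h8 := mul_le_mul_of_nonneg_left h2 (sq_nonneg (Δ:ℝ))
        nlinarith [h1, h8]
      · -- boundary case : Δ x u = δ xmax
        by_cases hall : ∀ v, v ≠ u → x v = xmax
        · exfalso
          have hwne : w ≠ u := by
            intro h
            rw [h, hu] at hw
            omega
          have hxw : x w = xmax := hall w hwne
          have hk1 : (1:ℕ) ≤ k := by omega
          have hedge_at_u : ∀ e ∈ E, u ∈ e → ∑ w' ∈ e, x w' = x u + ((k:ℝ) - 1) * xmax := by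
            intro e he hue
            rw [← Finset.add_sum_erase _ _ hue]
            congr 1
            have hconst : ∀ w' ∈ e.erase u, x w' = xmax := fun w' hw' =>
              hall w' (Finset.ne_of_mem_erase hw')
            rw [Finset.sum_congr rfl hconst, Finset.sum_const, nsmul_eq_mul,
              Finset.card_erase_of_mem hue, hunif e he]
            push_cast [Nat.cast_sub hk1]
            ring
          have E1 : ρ * x u = (δ:ℝ) * (x u + ((k:ℝ) - 1) * xmax) := by
            have hterm : ∀ e ∈ E.filter (fun e => u ∈ e), ∑ w' ∈ e, x w' = x u + ((k:ℝ) - 1) * xmax := by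
              intro e he
              rw [Finset.mem_filter] at he
              exact hedge_at_u e he.1 he.2
            rw [eig u, Finset.sum_congr rfl hterm, Finset.sum_const, nsmul_eq_mul,
              show (E.filter (fun e => u ∈ e)).card = δ from hu]
          set Ew := E.filter (fun e => w ∈ e) with hEw
          set c := (Ew.filter (fun e => u ∈ e)).card with hc
          have hcle : c ≤ δ := by
            have := hfiltercard (fun e => w ∈ e) u
            rwa [hu] at this
          have hccard : (Ew.filter (fun e => ¬ u ∈ e)).card = Δ - c := by
            have h0 := Finset.card_filter_add_card_filter_not
              (s := Ew) (p := fun e => u ∈ e)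
            have h1 : Ew.card = Δ := hw
            omega
          have hcΔ : c ≤ Δ := le_trans hcle hδΔ
          have E2 : ρ * xmax = (c:ℝ) * (x u + ((k:ℝ) - 1) * xmax) + ((Δ:ℝ) - c) * ((k:ℝ) * xmax) := by
            have hsplit := (Finset.sum_filter_add_sum_filter_not Ew (fun e => u ∈ e)
              (fun e => ∑ w' ∈ e, x w')).symm
            have ha2 : ∀ e ∈ Ew.filter (fun e => u ∈ e), ∑ w' ∈ e, x w' = x u + ((k:ℝ) - 1) * xmax := by
              intro e he
              rw [Finset.mem_filter, Finset.mem_filter] at he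
              exact hedge_at_u e he.1.1 he.2
            have hb2 : ∀ e ∈ Ew.filter (fun e => ¬ u ∈ e), ∑ w' ∈ e, x w' = (k:ℝ) * xmax := by
              intro e he
              rw [Finset.mem_filter, Finset.mem_filter] at he
              have hconst : ∀ w' ∈ e, x w' = xmax := fun w' hw' =>
                hall w' (fun hh => he.2 (hh ▸ hw'))
              rw [Finset.sum_congr rfl hconst, Finset.sum_const, nsmul_eq_mul, hunif e he.1.1]
            calc ρ * xmax = ρ * x w := by rw [hxw]
            _ = ∑ e ∈ Ew, ∑ w' ∈ e, x w' := eig w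
            _ = (∑ e ∈ Ew.filter (fun e => u ∈ e), ∑ w' ∈ e, x w')
                + ∑ e ∈ Ew.filter (fun e => ¬ u ∈ e), ∑ w' ∈ e, x w' := hsplit
            _ = (c:ℝ) * (x u + ((k:ℝ) - 1) * xmax) + ((Δ:ℝ) - c) * ((k:ℝ) * xmax) := by
                rw [Finset.sum_congr rfl ha2, Finset.sum_congr rfl hb2,
                  Finset.sum_const, Finset.sum_const, nsmul_eq_mul, nsmul_eq_mul, hccard]
                push_cast [Nat.cast_sub hcΔ]
                ring
          have hcR : (c:ℝ) ≤ (δ:ℝ) := by exact_mod_cast hcle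
          have hxuM : x u < xmax := by nlinarith [hxpos u, hMpos, hΔR]
          have hρM : ρ * xmax = (δ:ℝ) * xmax + ((k:ℝ) - 1) * (Δ:ℝ) * xmax := by
            have h0 : (δ:ℝ) ≠ 0 := ne_of_gt hδR
            apply mul_left_cancel₀ h0
            calc (δ:ℝ) * (ρ * xmax) = ρ * ((δ:ℝ) * xmax) := by ring
            _ = ρ * ((Δ:ℝ) * x u) := by rw [heqa]
            _ = (Δ:ℝ) * (ρ * x u) := by ring
            _ = (Δ:ℝ) * ((δ:ℝ) * (x u + ((k:ℝ) - 1) * xmax)) := by rw [E1]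
            _ = (δ:ℝ) * ((Δ:ℝ) * x u) + (δ:ℝ) * (((k:ℝ) - 1) * ((Δ:ℝ) * xmax)) := by ring
            _ = (δ:ℝ) * ((δ:ℝ) * xmax) + (δ:ℝ) * (((k:ℝ) - 1) * ((Δ:ℝ) * xmax)) := by rw [heqa]
            _ = (δ:ℝ) * ((δ:ℝ) * xmax + ((k:ℝ) - 1) * (Δ:ℝ) * xmax) := by ring
          have h4 : (c:ℝ) * (xmax - x u) = ((Δ:ℝ) - (δ:ℝ)) * xmax := by nlinarith [E2, hρM]
          have h5 : (Δ:ℝ) * (xmax - x u) = ((Δ:ℝ) - (δ:ℝ)) * xmax := by nlinarith [heqa]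
          have h6 : (c:ℝ) * (xmax - x u) < (Δ:ℝ) * (xmax - x u) :=
            mul_lt_mul_of_pos_right (by linarith) (by linarith)
          linarith
        · push_neg at hall
          obtain ⟨v₁, hv₁ne, hv₁⟩ := hall
          have hv₁lt : x v₁ < xmax := lt_of_le_of_ne (hxle v₁) hv₁
          have h2 : (xmax ^ 2 - x u ^ 2) + (xmax ^ 2 - x v₁ ^ 2) ≤ ∑ v : V, (xmax ^ 2 - x v ^ 2) := by
            rw [← Finset.add_sum_erase _ _ (Finset.mem_univ u)]
            apply add_le_add_right
            exact Finset.single_le_sum (fun v _ => hterm_nn v)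
              (Finset.mem_erase.2 ⟨hv₁ne, Finset.mem_univ v₁⟩)
          have h1 : ((Δ:ℝ) * x u) ^ 2 = ((δ:ℝ) * xmax) ^ 2 := by rw [heqa]
          have h3 : 0 < xmax ^ 2 - x v₁ ^ 2 := by nlinarith [hxpos v₁, hv₁lt]
          have hΔsq : (0:ℝ) < (Δ:ℝ)^2 := pow_pos (lt_trans hδR hΔR) 2
          rw [← hsum_id]
          have h8 := mul_le_mul_of_nonneg_left h2 hΔsq.le
          have h9 := mul_lt_mul_of_pos_left h3 hΔsq
          nlinarith [h1, h8, h9]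
  -- final conversions
  set A : ℝ := (δ:ℝ)^2 + ((n:ℝ) - 1) * (Δ:ℝ)^2 with hA
  have hn1R : (1:ℝ) ≤ (n:ℝ) := by exact_mod_cast (by omega : 1 ≤ n)
  have hApos : 0 < A := by
    have h1 : (1:ℝ) ≤ (δ:ℝ) := by exact_mod_cast hδ1
    have h2 : 0 ≤ ((n:ℝ) - 1) * (Δ:ℝ)^2 := mul_nonneg (by linarith) (sq_nonneg _)
    rw [hA]
    nlinarith
  have hsqrtA : 0 < Real.sqrt A := Real.sqrt_pos.2 hApos
  have hQ : (Δ:ℝ)^2 ≤ xmax^2 * A := by rw [hA]; nlinarith [hmainle]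
  have hbound : (Δ:ℝ) / Real.sqrt A ≤ xmax := by
    rw [div_le_iff₀ hsqrtA]
    have h2 : ((Δ:ℝ))^2 ≤ (xmax * Real.sqrt A)^2 := by
      rw [mul_pow, Real.sq_sqrt hApos.le]; exact hQ
    have h3 := Real.sqrt_le_sqrt h2
    rwa [Real.sqrt_sq (Nat.cast_nonneg Δ), Real.sqrt_sq (by positivity)] at h3
  refine ⟨hbound, ?_, ?_⟩
  · intro heqq
    by_contra hnreg
    have hltδΔ : δ < Δ := by
      rcases lt_or_eq_of_le hδΔ with h | h
      · exact h
      · exact absurd ⟨Δ, fun v => le_antisymm (hΔge v) (h ▸ hδle v)⟩ hnreg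
    have hs := hmainlt hltδΔ
    have hQs : (Δ:ℝ)^2 < xmax^2 * A := by rw [hA]; nlinarith [hs]
    rw [heqq] at hQs
    have hqq : ((Δ:ℝ) / Real.sqrt A)^2 * A = (Δ:ℝ)^2 := by
      rw [div_pow, Real.sq_sqrt hApos.le, div_mul_cancel₀ _ (ne_of_gt hApos)]
    linarith
  · intro hreg
    obtain ⟨r₀, hr⟩ := hreg
    have hδr : δ = r₀ := by rw [← hu, hr u]
    have hΔr : Δ = r₀ := by rw [← hw, hr w]
    have hNV : Nonempty V := Fintype.card_pos_iff.mp (by omega)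
    have hsx : 0 < ∑ v, x v := Finset.sum_pos (fun v _ => hxpos v) Finset.univ_nonempty
    have hρeq : ρ = (k:ℝ) * (δ:ℝ) := by
      have h1 : ∑ v : V, ρ * x v = ρ * ∑ v, x v := by rw [Finset.mul_sum]
      have h2 : ∑ v : V, ρ * x v = ∑ v : V, ∑ e ∈ E.filter (fun e => v ∈ e), ∑ w' ∈ e, x w' :=
        Finset.sum_congr rfl (fun v _ => eig v)
      have h3 := double_count' E (fun e => ∑ w' ∈ e, x w')
      have h4 : ∑ e ∈ E, ((e.card : ℕ):ℝ) * ∑ w' ∈ e, x w' = (k:ℝ) * ∑ e ∈ E, ∑ w' ∈ e, x w' := by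
        rw [Finset.mul_sum]
        exact Finset.sum_congr rfl fun e he => by rw [hunif e he]
      have h5 := double_count E x
      have h6 : ∑ v : V, ((E.filter (fun e => v ∈ e)).card : ℝ) * x v = (δ:ℝ) * ∑ v, x v := by
        rw [Finset.mul_sum]
        refine Finset.sum_congr rfl fun v _ => ?_
        have hdv : (E.filter (fun e => v ∈ e)).card = δ := by
          show deg E v = δ
          rw [hδr]; exact hr v
        rw [hdv]
      have hfin : ρ * ∑ v, x v = ((k:ℝ) * (δ:ℝ)) * ∑ v, x v := by
        rw [← h1, h2, h3, h4, h5, h6]; ring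
      exact mul_right_cancel₀ (ne_of_gt hsx) hfin
    have step : ∀ a b : V, (a ≠ b ∧ ∃ e ∈ E, a ∈ e ∧ b ∈ e) → x a = xmax → x b = xmax := by
      rintro a b ⟨hne, e, heE, hae, hbe⟩ hxa
      have hdega : (E.filter (fun e' => a ∈ e')).card = δ := by
        show deg E a = δ
        rw [hδr]; exact hr a
      have hsum : ∑ e' ∈ E.filter (fun e' => a ∈ e'), ∑ w' ∈ e', x w'
          = (((E.filter (fun e' => a ∈ e')).card : ℕ) : ℝ) * ((k:ℝ) * xmax) := by
        rw [← eig a, hxa, hρeq, hdega]; ring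
      have hSe := sum_eq_of_le (fun e' he' => esum_le_k e' (Finset.mem_filter.1 he').1) hsum
        e (Finset.mem_filter.2 ⟨heE, hae⟩)
      have hsum2 : ∑ w' ∈ e, x w' = ((e.card : ℕ):ℝ) * xmax := by
        rw [hSe, hunif e heE]
      exact sum_eq_of_le (fun w' _ => hxle w') hsum2 b hbe
    have hconst : ∀ v, x v = xmax := by
      intro v
      have hpath := hconn vstar v
      induction hpath with
      | refl => exact hvstar
      | tail _ hrel ih => exact step _ _ hrel ih
    have hnormn : (n:ℝ) * xmax^2 = 1 := by
      rw [← hxnorm, Finset.sum_congr rfl (fun v _ => by rw [hconst v] : ∀ v ∈ Finset.univ, x v ^ 2 = xmax ^ 2),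
        Finset.sum_const, nsmul_eq_mul, Finset.card_univ]
    have hδΔR : (δ:ℝ) = (Δ:ℝ) := by rw [hδr, hΔr]
    have h7 : (xmax * Real.sqrt A)^2 = (Δ:ℝ)^2 := by
      rw [mul_pow, Real.sq_sqrt hApos.le, hA, ← hδΔR]
      nlinarith [hnormn]
    have h8 : xmax * Real.sqrt A = (Δ:ℝ) := by
      rw [← Real.sqrt_sq (by positivity : (0:ℝ) ≤ xmax * Real.sqrt A), h7,
        Real.sqrt_sq (Nat.cast_nonneg Δ)]
    exact ((eq_div_iff hsqrtA.ne').mpr h8).symm.symm
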